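/- For every integer n ≥ 1, ∑_{m=1}^{n-1} σ_3(m) σ_3(n − m) = (σ_7(n) − σ_3(n)) / 120, where σ_j(n) = ∑_{d | n} d^j. -/

import Mathlib

set_option maxHeartbeats 1600000

open Finset ArithmeticFunction

/-! Auxiliary development for the Hurwitz convolution identity. -/

namespace HurwitzAux

abbrev Q4 := (ℕ × ℕ) × (ℕ × ℕ)

/-- The set of quadruples `((a,x),(b,y))` of positive naturals with `a*x + b*y = n`. -/
def Aq (n : ℕ) : Finset Q4 :=
  (Finset.Ico 1 n).biUnion fun m => (Nat.divisorsAntidiagonal m) ×ˢ (Nat.divisorsAntidiagonal (n - m))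

lemma mem_Aq {n : ℕ} {t : Q4} :
    t ∈ Aq n ↔ 1 ≤ t.1.1 ∧ 1 ≤ t.1.2 ∧ 1 ≤ t.2.1 ∧ 1 ≤ t.2.2 ∧
      t.1.1 * t.1.2 + t.2.1 * t.2.2 = n := by
  simp only [Aq, Finset.mem_biUnion, Finset.mem_Ico, Finset.mem_product,
    Nat.mem_divisorsAntidiagonal]
  constructor
  · rintro ⟨m, ⟨hm1, hm2⟩, ⟨hA, -⟩, ⟨hB, hB0⟩⟩
    have h1 : t.1.1 ≠ 0 ∧ t.1.2 ≠ 0 := by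
      rw [← Nat.mul_ne_zero_iff, hA]; omega
    have h2 : t.2.1 ≠ 0 ∧ t.2.2 ≠ 0 := by
      rw [← Nat.mul_ne_zero_iff, hB]; omega
    refine ⟨by omega, by omega, by omega, by omega, ?_⟩
    rw [hA, hB]; omega
  · rintro ⟨ha, hx, hb, hy, heq⟩
    refine ⟨t.1.1 * t.1.2, ⟨?_, ?_⟩, ⟨rfl, ?_⟩, ⟨?_, ?_⟩⟩
    · have := Nat.mul_pos ha hx; omega
    · have := Nat.mul_pos hb hy; omega
    · have := Nat.mul_pos ha hx; omega
    · omega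
    · have := Nat.mul_pos hb hy; omega

/-- Trichotomy split of a sum over a finset according to two `ℕ`-valued functions. -/
lemma tri {α : Type*} (s : Finset α) (u v : α → ℕ) (f : α → ℚ) :
    ∑ t ∈ s, f t
      = ∑ t ∈ s.filter (fun t => v t < u t), f t
        + ∑ t ∈ s.filter (fun t => u t < v t), f t
        + ∑ t ∈ s.filter (fun t => u t = v t), f t := by
  have key : ∀ t ∈ s, f t
      = (if v t < u t then f t else 0)
        + ((if u t < v t then f t else 0) + (if u t = v t then f t else 0)) := by
    intro t _
    rcases lt_trichotomy (u t) (v t) with h | h | h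
    · rw [if_neg (by omega), if_pos h, if_neg (by omega)]; ring
    · rw [if_neg (by omega), if_neg (by omega), if_pos h]; ring
    · rw [if_pos h, if_neg (by omega), if_neg (by omega)]; ring
  rw [Finset.sum_congr rfl key, Finset.sum_add_distrib, Finset.sum_add_distrib,
    Finset.sum_filter, Finset.sum_filter, Finset.sum_filter, add_assoc]

/-- Transport of a filtered sum over `Aq n` along an involution. -/
lemma sum_perm {n : ℕ} (p q : Q4 → Prop) [DecidablePred p] [DecidablePred q]
    (e : Q4 → Q4)
    (hmem : ∀ t, t ∈ Aq n → e t ∈ Aq n)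
    (hinv : ∀ t, e (e t) = t)
    (hpq : ∀ t, p t → q (e t)) (hqp : ∀ t, q t → p (e t))
    (f : Q4 → ℚ) :
    ∑ t ∈ (Aq n).filter p, f (e t) = ∑ t ∈ (Aq n).filter q, f t := by
  refine Finset.sum_nbij' (i := e) (j := e) ?_ ?_ ?_ ?_ ?_
  · intro t ht
    rw [Finset.mem_filter] at ht ⊢
    exact ⟨hmem t ht.1, hpq t ht.2⟩
  · intro t ht
    rw [Finset.mem_filter] at ht ⊢
    exact ⟨hmem t ht.1, hqp t ht.2⟩
  · intro t _; exact hinv t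
  · intro t _; exact hinv t
  · intro t _; rfl

/-- The swap involution `((a,x),(b,y)) ↦ ((b,y),(a,x))` as instance data. -/
lemma swap_mem {n : ℕ} : ∀ t : Q4, t ∈ Aq n → ((t.2, t.1) : Q4) ∈ Aq n := by
  rintro ⟨⟨a, x⟩, ⟨b, y⟩⟩ ht
  rw [mem_Aq] at ht ⊢
  dsimp only at ht ⊢
  exact ⟨ht.2.2.1, ht.2.2.2.1, ht.1, ht.2.1, by omega⟩

/-- The transpose involution `((a,x),(b,y)) ↦ ((x,a),(y,b))`. -/
lemma transp_mem {n : ℕ} : ∀ t : Q4, t ∈ Aq n → (((t.1.2, t.1.1), (t.2.2, t.2.1)) : Q4) ∈ Aq n := by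
  rintro ⟨⟨a, x⟩, ⟨b, y⟩⟩ ht
  rw [mem_Aq] at ht ⊢
  dsimp only at ht ⊢
  refine ⟨ht.2.1, ht.1, ht.2.2.2.1, ht.2.2.1, ?_⟩
  have := ht.2.2.2.2
  rw [Nat.mul_comm x a, Nat.mul_comm y b]
  exact this

/-- Composite `ψ = σ ∘ τ`: `((a,x),(b,y)) ↦ ((y,b),(x,a))`. -/
lemma psi_mem {n : ℕ} : ∀ t : Q4, t ∈ Aq n → (((t.2.2, t.2.1), (t.1.2, t.1.1)) : Q4) ∈ Aq n := by
  rintro ⟨⟨a, x⟩, ⟨b, y⟩⟩ ht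
  rw [mem_Aq] at ht ⊢
  dsimp only at ht ⊢
  refine ⟨ht.2.2.2.1, ht.2.2.1, ht.2.1, ht.1, ?_⟩
  have := ht.2.2.2.2
  rw [Nat.mul_comm y b, Nat.mul_comm x a]
  omega

/-- The Liouville shear: summing over the region `a > b` one may substitute
`(a,x,b,y) ↦ (x+y, b, x, a-b)`. -/
lemma keyL {n : ℕ} (f : ℕ → ℕ → ℕ → ℕ → ℚ) :
    ∑ t ∈ (Aq n).filter (fun t => t.2.1 < t.1.1), f t.1.1 t.1.2 t.2.1 t.2.2
      = ∑ t ∈ (Aq n).filter (fun t => t.2.1 < t.1.1),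
          f (t.2.2 + t.1.2) t.2.1 t.1.2 (t.1.1 - t.2.1) := by
  have step1 : ∑ t ∈ (Aq n).filter (fun t => t.2.1 < t.1.1), f t.1.1 t.1.2 t.2.1 t.2.2
      = ∑ t ∈ (Aq n).filter (fun t => t.1.2 < t.2.2),
          f (t.1.1 + t.2.1) t.1.2 t.2.1 (t.2.2 - t.1.2) := by
    refine Finset.sum_nbij'
      (i := fun t => (((t.1.1 - t.2.1, t.1.2), (t.2.1, t.1.2 + t.2.2)) : Q4))
      (j := fun t => (((t.1.1 + t.2.1, t.1.2), (t.2.1, t.2.2 - t.1.2)) : Q4)) ?_ ?_ ?_ ?_ ?_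
    · rintro ⟨⟨a, x⟩, ⟨b, y⟩⟩ ht
      rw [Finset.mem_filter, mem_Aq] at ht
      dsimp only at ht
      obtain ⟨⟨ha, hx, hb, hy, heq⟩, hba⟩ := ht
      rw [Finset.mem_filter, mem_Aq]
      dsimp only at hba heq ⊢
      obtain ⟨c, rfl⟩ : ∃ c, a = b + (c + 1) := ⟨a - b - 1, by omega⟩
      refine ⟨⟨by omega, hx, hb, by omega, ?_⟩, by omega⟩
      have h1 : b + (c + 1) - b = c + 1 := by omega
      rw [h1]
      have h2 : (c + 1) * x + b * (x + y) = (b + (c + 1)) * x + b * y := by ring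
      rw [h2, heq]
    · rintro ⟨⟨a, x⟩, ⟨b, y⟩⟩ ht
      rw [Finset.mem_filter, mem_Aq] at ht
      dsimp only at ht
      obtain ⟨⟨ha, hx, hb, hy, heq⟩, hxy⟩ := ht
      rw [Finset.mem_filter, mem_Aq]
      dsimp only at hxy heq ⊢
      obtain ⟨c, rfl⟩ : ∃ c, y = x + (c + 1) := ⟨y - x - 1, by omega⟩
      refine ⟨⟨by omega, hx, hb, by omega, ?_⟩, by omega⟩
      have h1 : x + (c + 1) - x = c + 1 := by omega
      rw [h1]
      have h2 : (a + b) * x + b * (c + 1) = a * x + b * (x + (c + 1)) := by ring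
      rw [h2, heq]
    · rintro ⟨⟨a, x⟩, ⟨b, y⟩⟩ ht
      rw [Finset.mem_filter, mem_Aq] at ht
      dsimp only at ht
      obtain ⟨⟨ha, hx, hb, hy, heq⟩, hba⟩ := ht
      dsimp only at hba ⊢
      simp only [Prod.mk.injEq, and_true, true_and]
      omega
    · rintro ⟨⟨a, x⟩, ⟨b, y⟩⟩ ht
      rw [Finset.mem_filter, mem_Aq] at ht
      dsimp only at ht
      obtain ⟨⟨ha, hx, hb, hy, heq⟩, hxy⟩ := ht
      dsimp only at hxy ⊢
      simp only [Prod.mk.injEq, and_true, true_and]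
      omega
    · rintro ⟨⟨a, x⟩, ⟨b, y⟩⟩ ht
      rw [Finset.mem_filter, mem_Aq] at ht
      dsimp only at ht
      obtain ⟨⟨ha, hx, hb, hy, heq⟩, hba⟩ := ht
      dsimp only at hba ⊢
      have h1 : a - b + b = a := by omega
      have h2 : x + y - x = y := by omega
      rw [h1, h2]
  rw [step1]
  have step2 : ∑ t ∈ (Aq n).filter (fun t => t.2.1 < t.1.1),
        f ((t.2.2) + (t.1.2)) t.2.1 t.1.2 (t.1.1 - t.2.1)
      = ∑ t ∈ (Aq n).filter (fun t => t.1.2 < t.2.2),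
          f (t.1.1 + t.2.1) t.1.2 t.2.1 (t.2.2 - t.1.2) := by
    exact sum_perm (fun t => t.2.1 < t.1.1) (fun t => t.1.2 < t.2.2)
      (fun t => ((t.2.2, t.2.1), (t.1.2, t.1.1))) psi_mem (fun t => rfl)
      (fun t h => h) (fun t h => h)
      (fun t => f (t.1.1 + t.2.1) t.1.2 t.2.1 (t.2.2 - t.1.2))
  rw [← step2]

/-- The diagonal `a = b` of `Aq n`, reparametrized by a divisor `d` and `x`. -/
lemma diag {n : ℕ} (f : ℕ → ℕ → ℕ → ℕ → ℚ) :
    ∑ t ∈ (Aq n).filter (fun t => t.1.1 = t.2.1), f t.1.1 t.1.2 t.2.1 t.2.2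
      = ∑ p ∈ n.divisors.sigma (fun d => Finset.Ico 1 (n / d)),
          f p.1 p.2 p.1 (n / p.1 - p.2) := by
  refine Finset.sum_nbij'
    (i := fun t => (⟨t.1.1, t.1.2⟩ : Σ _ : ℕ, ℕ))
    (j := fun p => (((p.1, p.2), (p.1, n / p.1 - p.2)) : Q4)) ?_ ?_ ?_ ?_ ?_
  · rintro ⟨⟨a, x⟩, ⟨b, y⟩⟩ ht
    rw [Finset.mem_filter, mem_Aq] at ht
    dsimp only at ht
    obtain ⟨⟨ha, hx, hb, hy, heq⟩, hab⟩ := ht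
    dsimp only at hab heq ⊢
    subst hab
    have hmul : a * (x + y) = n := by rw [Nat.mul_add]; exact heq
    have hdvd : a ∣ n := ⟨x + y, hmul.symm⟩
    have hdiv : n / a = x + y := by
      rw [← hmul, Nat.mul_div_cancel_left _ (by omega : 0 < a)]
    rw [Finset.mem_sigma, Nat.mem_divisors, Finset.mem_Ico]
    dsimp only
    rw [hdiv]
    have hpos : 0 < n := by rw [← hmul]; exact Nat.mul_pos (by omega) (by omega)
    exact ⟨⟨hdvd, by omega⟩, by omega, by omega⟩
  · rintro ⟨d, x⟩ hp
    rw [Finset.mem_sigma, Nat.mem_divisors, Finset.mem_Ico] at hp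
    dsimp only at hp
    obtain ⟨⟨hdvd, hn0⟩, hx1, hx2⟩ := hp
    rw [Finset.mem_filter, mem_Aq]
    dsimp only
    have hd : 0 < d := by
      rcases Nat.eq_zero_or_pos d with rfl | h
      · exfalso; apply hn0; exact Nat.eq_zero_of_zero_dvd hdvd
      · exact h
    refine ⟨⟨by omega, by omega, by omega, by omega, ?_⟩, rfl⟩
    have : x + (n / d - x) = n / d := by omega
    calc d * x + d * (n / d - x) = d * (x + (n / d - x)) := by ring
      _ = d * (n / d) := by rw [this]
      _ = n := Nat.mul_div_cancel' hdvd
  · rintro ⟨⟨a, x⟩, ⟨b, y⟩⟩ ht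
    rw [Finset.mem_filter, mem_Aq] at ht
    dsimp only at ht
    obtain ⟨⟨ha, hx, hb, hy, heq⟩, hab⟩ := ht
    dsimp only at hab heq ⊢
    subst hab
    have hmul : a * (x + y) = n := by rw [Nat.mul_add]; exact heq
    have hdiv : n / a = x + y := by
      rw [← hmul, Nat.mul_div_cancel_left _ (by omega : 0 < a)]
    simp only [Prod.mk.injEq, and_true, true_and]
    omega
  · rintro ⟨d, x⟩ hp
    rfl
  · rintro ⟨⟨a, x⟩, ⟨b, y⟩⟩ ht
    rw [Finset.mem_filter, mem_Aq] at ht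
    dsimp only at ht
    obtain ⟨⟨ha, hx, hb, hy, heq⟩, hab⟩ := ht
    dsimp only at hab heq ⊢
    subst hab
    have hmul : a * (x + y) = n := by rw [Nat.mul_add]; exact heq
    have hdiv : n / a = x + y := by
      rw [← hmul, Nat.mul_div_cancel_left _ (by omega : 0 < a)]
    have : n / a - x = y := by omega
    rw [this]

/-- Power sums. -/
lemma pow2sum (e : ℕ) : ∑ x ∈ Finset.Ico 1 e, (x : ℚ) ^ 2
    = (2 * (e : ℚ) ^ 3 - 3 * (e : ℚ) ^ 2 + e) / 6 := by
  induction e with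
  | zero => simp
  | succ k ih =>
    rcases Nat.eq_zero_or_pos k with rfl | hk
    · simp
      norm_num
    · rw [Finset.sum_Ico_succ_top hk, ih]; push_cast; ring

lemma pow3sum (e : ℕ) : ∑ x ∈ Finset.Ico 1 e, (x : ℚ) ^ 3
    = ((e : ℚ) ^ 4 - 2 * (e : ℚ) ^ 3 + (e : ℚ) ^ 2) / 4 := by
  induction e with
  | zero => simp
  | succ k ih =>
    rcases Nat.eq_zero_or_pos k with rfl | hk
    · simp
      norm_num
    · rw [Finset.sum_Ico_succ_top hk, ih]; push_cast; ring

lemma pow4sum (e : ℕ) : ∑ x ∈ Finset.Ico 1 e, (x : ℚ) ^ 4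
    = (6 * (e : ℚ) ^ 5 - 15 * (e : ℚ) ^ 4 + 10 * (e : ℚ) ^ 3 - e) / 30 := by
  induction e with
  | zero => simp
  | succ k ih =>
    rcases Nat.eq_zero_or_pos k with rfl | hk
    · simp
      norm_num
    · rw [Finset.sum_Ico_succ_top hk, ih]; push_cast; ring

lemma pow5sum (e : ℕ) : ∑ x ∈ Finset.Ico 1 e, (x : ℚ) ^ 5
    = (2 * (e : ℚ) ^ 6 - 6 * (e : ℚ) ^ 5 + 5 * (e : ℚ) ^ 4 - (e : ℚ) ^ 2) / 12 := by
  induction e with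
  | zero => simp
  | succ k ih =>
    rcases Nat.eq_zero_or_pos k with rfl | hk
    · simp
      norm_num
    · rw [Finset.sum_Ico_succ_top hk, ih]; push_cast; ring

/-- The Faulhaber-type evaluation. -/
lemma fh (e : ℕ) : ∑ x ∈ Finset.Ico 1 e,
      ((x : ℚ) ^ 2 * ((e : ℚ) - x) ^ 4 + (x : ℚ) ^ 3 * ((e : ℚ) - x) ^ 3)
    = ((e : ℚ) ^ 7 - (e : ℚ) ^ 3) / 60 := by
  have expand : ∑ x ∈ Finset.Ico 1 e,
        ((x : ℚ) ^ 2 * ((e : ℚ) - x) ^ 4 + (x : ℚ) ^ 3 * ((e : ℚ) - x) ^ 3)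
      = ∑ x ∈ Finset.Ico 1 e,
          ((e : ℚ) ^ 4 * (x : ℚ) ^ 2 - 3 * (e : ℚ) ^ 3 * (x : ℚ) ^ 3
            + 3 * (e : ℚ) ^ 2 * (x : ℚ) ^ 4 - (e : ℚ) * (x : ℚ) ^ 5) := by
    refine Finset.sum_congr rfl fun x _ => by ring
  rw [expand]
  rw [Finset.sum_sub_distrib, Finset.sum_add_distrib, Finset.sum_sub_distrib,
    ← Finset.mul_sum, ← Finset.mul_sum, ← Finset.mul_sum, ← Finset.mul_sum,
    pow2sum, pow3sum, pow4sum, pow5sum]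
  ring

end HurwitzAux

open HurwitzAux

/-- Hurwitz convolution identity: for `n ≥ 1`,
`∑_{m=1}^{n-1} σ₃(m) σ₃(n−m) = (σ₇(n) − σ₃(n)) / 120`. -/
theorem hurwitz_sigma_convolution (n : ℕ) (hn : 1 ≤ n) :
    (∑ m ∈ Finset.Ico 1 n, ((sigma 3 m : ℚ) * (sigma 3 (n - m) : ℚ)))
      = ((sigma 7 n : ℚ) - (sigma 3 n : ℚ)) / 120 := by
  classical
  -- abbreviations for the regions
  set R : Finset Q4 := (Aq n).filter (fun t => t.2.1 < t.1.1) with hR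
  set Lb : Finset Q4 := (Aq n).filter (fun t => t.1.1 < t.2.1) with hLb
  set Db : Finset Q4 := (Aq n).filter (fun t => t.1.1 = t.2.1) with hDb
  set Rx : Finset Q4 := (Aq n).filter (fun t => t.2.2 < t.1.2) with hRx
  set Lx : Finset Q4 := (Aq n).filter (fun t => t.1.2 < t.2.2) with hLx
  set Dx : Finset Q4 := (Aq n).filter (fun t => t.1.2 = t.2.2) with hDx
  -- step 1 : the convolution sum equals the quadruple sum
  have hsig : ∀ m : ℕ, (sigma 3 m : ℚ) = ∑ p ∈ m.divisorsAntidiagonal, (p.2 : ℚ) ^ 3 := by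
    intro m
    rw [Nat.sum_divisorsAntidiagonal' (f := fun _ v => (v : ℚ) ^ 3)]
    rw [ArithmeticFunction.sigma_apply]
    push_cast
    rfl
  have hdisj : (↑(Finset.Ico 1 n) : Set ℕ).PairwiseDisjoint
      (fun m => (Nat.divisorsAntidiagonal m) ×ˢ (Nat.divisorsAntidiagonal (n - m))) := by
    intro m1 _ m2 _ hne
    simp only [Function.onFun, Finset.disjoint_left]
    rintro ⟨p, q⟩ hp hq
    rw [Finset.mem_product, Nat.mem_divisorsAntidiagonal] at hp hq
    exact hne (hp.1.1.symm.trans hq.1.1)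
  have h0 : (∑ m ∈ Finset.Ico 1 n, ((sigma 3 m : ℚ) * (sigma 3 (n - m) : ℚ)))
      = ∑ t ∈ Aq n, (t.1.2 : ℚ) ^ 3 * (t.2.2 : ℚ) ^ 3 := by
    rw [Aq, Finset.sum_biUnion hdisj]
    refine Finset.sum_congr rfl fun m _ => ?_
    rw [hsig m, hsig (n - m), Finset.sum_mul_sum, Finset.sum_product]
  -- trichotomies
  have t1 := tri (Aq n) (fun t => t.1.1) (fun t => t.2.1)
      (fun t => (t.1.2 : ℚ) ^ 3 * (t.2.2 : ℚ) ^ 3)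
  have t2 := tri (Aq n) (fun t => t.1.2) (fun t => t.2.2)
      (fun t => (t.1.2 : ℚ) ^ 3 * (t.2.2 : ℚ) ^ 3)
  have t3 := tri (Aq n) (fun t => t.1.1) (fun t => t.2.1)
      (fun t => (t.1.2 : ℚ) ^ 2 * (t.2.2 : ℚ) ^ 4)
  have t4 := tri (Aq n) (fun t => t.1.2) (fun t => t.2.2)
      (fun t => (t.1.2 : ℚ) ^ 2 * (t.2.2 : ℚ) ^ 4)
  rw [← hR, ← hLb, ← hDb] at t1 t3
  rw [← hRx, ← hLx, ← hDx] at t2 t4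
  -- swap-type transports
  have p1 : ∑ t ∈ R, (t.2.2 : ℚ) ^ 3 * (t.1.2 : ℚ) ^ 3
      = ∑ t ∈ Lb, (t.1.2 : ℚ) ^ 3 * (t.2.2 : ℚ) ^ 3 :=
    sum_perm (fun t : Q4 => t.2.1 < t.1.1) (fun t : Q4 => t.1.1 < t.2.1)
      (fun t => (t.2, t.1)) swap_mem (fun t => rfl)
      (fun t h => h) (fun t h => h) (fun t => (t.1.2 : ℚ) ^ 3 * (t.2.2 : ℚ) ^ 3)
  have p2 : ∑ t ∈ R, (t.1.1 : ℚ) ^ 3 * (t.2.1 : ℚ) ^ 3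
      = ∑ t ∈ Rx, (t.1.2 : ℚ) ^ 3 * (t.2.2 : ℚ) ^ 3 :=
    sum_perm (fun t : Q4 => t.2.1 < t.1.1) (fun t : Q4 => t.2.2 < t.1.2)
      (fun t => ((t.1.2, t.1.1), (t.2.2, t.2.1))) transp_mem (fun t => rfl)
      (fun t h => h) (fun t h => h) (fun t => (t.1.2 : ℚ) ^ 3 * (t.2.2 : ℚ) ^ 3)
  have p3 : ∑ t ∈ R, (t.2.1 : ℚ) ^ 3 * (t.1.1 : ℚ) ^ 3
      = ∑ t ∈ Lx, (t.1.2 : ℚ) ^ 3 * (t.2.2 : ℚ) ^ 3 :=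
    sum_perm (fun t : Q4 => t.2.1 < t.1.1) (fun t : Q4 => t.1.2 < t.2.2)
      (fun t => ((t.2.2, t.2.1), (t.1.2, t.1.1))) psi_mem (fun t => rfl)
      (fun t h => h) (fun t h => h) (fun t => (t.1.2 : ℚ) ^ 3 * (t.2.2 : ℚ) ^ 3)
  have p4 : ∑ t ∈ Db, (t.1.1 : ℚ) ^ 3 * (t.2.1 : ℚ) ^ 3
      = ∑ t ∈ Dx, (t.1.2 : ℚ) ^ 3 * (t.2.2 : ℚ) ^ 3 :=
    sum_perm (fun t : Q4 => t.1.1 = t.2.1) (fun t : Q4 => t.1.2 = t.2.2)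
      (fun t => ((t.1.2, t.1.1), (t.2.2, t.2.1))) transp_mem (fun t => rfl)
      (fun t h => h) (fun t h => h) (fun t => (t.1.2 : ℚ) ^ 3 * (t.2.2 : ℚ) ^ 3)
  have p1' : ∑ t ∈ R, (t.2.2 : ℚ) ^ 2 * (t.1.2 : ℚ) ^ 4
      = ∑ t ∈ Lb, (t.1.2 : ℚ) ^ 2 * (t.2.2 : ℚ) ^ 4 :=
    sum_perm (fun t : Q4 => t.2.1 < t.1.1) (fun t : Q4 => t.1.1 < t.2.1)
      (fun t => (t.2, t.1)) swap_mem (fun t => rfl)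
      (fun t h => h) (fun t h => h) (fun t => (t.1.2 : ℚ) ^ 2 * (t.2.2 : ℚ) ^ 4)
  have p2' : ∑ t ∈ R, (t.1.1 : ℚ) ^ 2 * (t.2.1 : ℚ) ^ 4
      = ∑ t ∈ Rx, (t.1.2 : ℚ) ^ 2 * (t.2.2 : ℚ) ^ 4 :=
    sum_perm (fun t : Q4 => t.2.1 < t.1.1) (fun t : Q4 => t.2.2 < t.1.2)
      (fun t => ((t.1.2, t.1.1), (t.2.2, t.2.1))) transp_mem (fun t => rfl)
      (fun t h => h) (fun t h => h) (fun t => (t.1.2 : ℚ) ^ 2 * (t.2.2 : ℚ) ^ 4)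
  have p3' : ∑ t ∈ R, (t.2.1 : ℚ) ^ 2 * (t.1.1 : ℚ) ^ 4
      = ∑ t ∈ Lx, (t.1.2 : ℚ) ^ 2 * (t.2.2 : ℚ) ^ 4 :=
    sum_perm (fun t : Q4 => t.2.1 < t.1.1) (fun t : Q4 => t.1.2 < t.2.2)
      (fun t => ((t.2.2, t.2.1), (t.1.2, t.1.1))) psi_mem (fun t => rfl)
      (fun t h => h) (fun t h => h) (fun t => (t.1.2 : ℚ) ^ 2 * (t.2.2 : ℚ) ^ 4)
  have p4' : ∑ t ∈ Db, (t.1.1 : ℚ) ^ 2 * (t.2.1 : ℚ) ^ 4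
      = ∑ t ∈ Dx, (t.1.2 : ℚ) ^ 2 * (t.2.2 : ℚ) ^ 4 :=
    sum_perm (fun t : Q4 => t.1.1 = t.2.1) (fun t : Q4 => t.1.2 = t.2.2)
      (fun t => ((t.1.2, t.1.1), (t.2.2, t.2.1))) transp_mem (fun t => rfl)
      (fun t h => h) (fun t h => h) (fun t => (t.1.2 : ℚ) ^ 2 * (t.2.2 : ℚ) ^ 4)
  -- diagonal normalizations
  have e1 : ∑ t ∈ Db, (t.1.1 : ℚ) ^ 2 * (t.2.1 : ℚ) ^ 4
      = ∑ t ∈ Db, (t.1.1 : ℚ) ^ 3 * (t.2.1 : ℚ) ^ 3 := by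
    refine Finset.sum_congr rfl fun t ht => ?_
    rw [hDb, Finset.mem_filter] at ht
    rw [ht.2]; ring
  -- ring normalizations of transported sums
  have q1 : ∑ t ∈ R, (t.2.2 : ℚ) ^ 3 * (t.1.2 : ℚ) ^ 3
      = ∑ t ∈ R, (t.1.2 : ℚ) ^ 3 * (t.2.2 : ℚ) ^ 3 :=
    Finset.sum_congr rfl fun t _ => by ring
  have q2 : ∑ t ∈ R, (t.2.1 : ℚ) ^ 3 * (t.1.1 : ℚ) ^ 3
      = ∑ t ∈ R, (t.1.1 : ℚ) ^ 3 * (t.2.1 : ℚ) ^ 3 :=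
    Finset.sum_congr rfl fun t _ => by ring
  have q3 : ∑ t ∈ R, (t.2.2 : ℚ) ^ 2 * (t.1.2 : ℚ) ^ 4
      = ∑ t ∈ R, (t.1.2 : ℚ) ^ 4 * (t.2.2 : ℚ) ^ 2 :=
    Finset.sum_congr rfl fun t _ => by ring
  have q4 : ∑ t ∈ R, (t.2.1 : ℚ) ^ 2 * (t.1.1 : ℚ) ^ 4
      = ∑ t ∈ R, (t.1.1 : ℚ) ^ 4 * (t.2.1 : ℚ) ^ 2 :=
    Finset.sum_congr rfl fun t _ => by ring
  -- the shear relations (with `ℚ`-subtraction on the region `b < a`)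
  have castsub : ∀ t ∈ R, ((t.1.1 - t.2.1 : ℕ) : ℚ) = (t.1.1 : ℚ) - (t.2.1 : ℚ) := by
    intro t ht
    rw [hR, Finset.mem_filter] at ht
    exact_mod_cast Nat.cast_sub (le_of_lt ht.2)
  have k2 : ∑ t ∈ R, (t.1.2 : ℚ) ^ 2 * (t.2.2 : ℚ) ^ 4
      = ∑ t ∈ R, (t.2.1 : ℚ) ^ 2 * ((t.1.1 : ℚ) - (t.2.1 : ℚ)) ^ 4 := by
    have := keyL (n := n) (fun a x b y => (x : ℚ) ^ 2 * (y : ℚ) ^ 4)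
    rw [← hR] at this
    rw [this]
    refine Finset.sum_congr rfl fun t ht => ?_
    rw [castsub t ht]
  have k3 : ∑ t ∈ R, (t.1.2 : ℚ) ^ 3 * (t.2.2 : ℚ) ^ 3
      = ∑ t ∈ R, (t.2.1 : ℚ) ^ 3 * ((t.1.1 : ℚ) - (t.2.1 : ℚ)) ^ 3 := by
    have := keyL (n := n) (fun a x b y => (x : ℚ) ^ 3 * (y : ℚ) ^ 3)
    rw [← hR] at this
    rw [this]
    refine Finset.sum_congr rfl fun t ht => ?_
    rw [castsub t ht]
  have k4 : ∑ t ∈ R, (t.1.2 : ℚ) ^ 4 * (t.2.2 : ℚ) ^ 2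
      = ∑ t ∈ R, (t.2.1 : ℚ) ^ 4 * ((t.1.1 : ℚ) - (t.2.1 : ℚ)) ^ 2 := by
    have := keyL (n := n) (fun a x b y => (x : ℚ) ^ 4 * (y : ℚ) ^ 2)
    rw [← hR] at this
    rw [this]
    refine Finset.sum_congr rfl fun t ht => ?_
    rw [castsub t ht]
  -- the central algebraic identity
  have c1 : ∑ t ∈ R, (t.2.1 : ℚ) ^ 2 * ((t.1.1 : ℚ) - (t.2.1 : ℚ)) ^ 4
        + 2 * ∑ t ∈ R, (t.2.1 : ℚ) ^ 3 * ((t.1.1 : ℚ) - (t.2.1 : ℚ)) ^ 3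
        + ∑ t ∈ R, (t.2.1 : ℚ) ^ 4 * ((t.1.1 : ℚ) - (t.2.1 : ℚ)) ^ 2
      = ∑ t ∈ R, (t.1.1 : ℚ) ^ 2 * (t.2.1 : ℚ) ^ 4
        + ∑ t ∈ R, (t.1.1 : ℚ) ^ 4 * (t.2.1 : ℚ) ^ 2
        - 2 * ∑ t ∈ R, (t.1.1 : ℚ) ^ 3 * (t.2.1 : ℚ) ^ 3 := by
    rw [Finset.mul_sum, Finset.mul_sum, ← Finset.sum_add_distrib, ← Finset.sum_add_distrib,
      ← Finset.sum_add_distrib, ← Finset.sum_sub_distrib]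
    refine Finset.sum_congr rfl fun t _ => by ring
  -- diagonal evaluation
  have d1 : ∑ t ∈ Db, (t.1.2 : ℚ) ^ 3 * (t.2.2 : ℚ) ^ 3
        + ∑ t ∈ Db, (t.1.2 : ℚ) ^ 2 * (t.2.2 : ℚ) ^ 4
      = ((sigma 7 n : ℚ) - (sigma 3 n : ℚ)) / 60 := by
    have dd3 := diag (n := n) (fun a x b y => (x : ℚ) ^ 3 * (y : ℚ) ^ 3)
    have dd2 := diag (n := n) (fun a x b y => (x : ℚ) ^ 2 * (y : ℚ) ^ 4)
    rw [← hDb] at dd3 dd2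
    rw [dd3, dd2, ← Finset.sum_add_distrib, Finset.sum_sigma]
    have inner : ∀ d ∈ n.divisors,
        ∑ x ∈ Finset.Ico 1 (n / d),
            ((x : ℚ) ^ 3 * ((n / d - x : ℕ) : ℚ) ^ 3 + (x : ℚ) ^ 2 * ((n / d - x : ℕ) : ℚ) ^ 4)
          = (((n / d : ℕ) : ℚ) ^ 7 - ((n / d : ℕ) : ℚ) ^ 3) / 60 := by
      intro d _
      rw [← fh (n / d)]
      refine Finset.sum_congr rfl fun x hx => ?_
      rw [Finset.mem_Ico] at hx
      have hc : ((n / d - x : ℕ) : ℚ) = ((n / d : ℕ) : ℚ) - (x : ℚ) := by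
        exact_mod_cast Nat.cast_sub (le_of_lt hx.2)
      rw [hc]; ring
    rw [Finset.sum_congr rfl inner]
    have hdivs : ∑ d ∈ n.divisors, ((((n / d : ℕ) : ℚ)) ^ 7 - (((n / d : ℕ) : ℚ)) ^ 3) / 60
        = ∑ d ∈ n.divisors, (((d : ℕ) : ℚ) ^ 7 - ((d : ℕ) : ℚ) ^ 3) / 60 := by
      exact Nat.sum_div_divisors n (fun d => (((d : ℕ) : ℚ) ^ 7 - ((d : ℕ) : ℚ) ^ 3) / 60)
    rw [hdivs]
    have h7 : (sigma 7 n : ℚ) = ∑ d ∈ n.divisors, (d : ℚ) ^ 7 := by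
      rw [ArithmeticFunction.sigma_apply]; push_cast; rfl
    have h3 : (sigma 3 n : ℚ) = ∑ d ∈ n.divisors, (d : ℚ) ^ 3 := by
      rw [ArithmeticFunction.sigma_apply]; push_cast; rfl
    rw [h7, h3]
    rw [← Finset.sum_sub_distrib, ← Finset.sum_div]
  -- final assembly
  rw [h0, t1]
  -- note t1 : ∑ Aq = ∑ R + ∑ Lb + ∑ Db for the cubic integrand
  -- now we have all linear relations; finish with linarith
  have final : ∑ t ∈ R, (t.1.2 : ℚ) ^ 3 * (t.2.2 : ℚ) ^ 3
        + ∑ t ∈ Lb, (t.1.2 : ℚ) ^ 3 * (t.2.2 : ℚ) ^ 3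
        + ∑ t ∈ Db, (t.1.2 : ℚ) ^ 3 * (t.2.2 : ℚ) ^ 3
      = ((sigma 7 n : ℚ) - (sigma 3 n : ℚ)) / 120 := by
    have L1 : ∑ t ∈ Lb, (t.1.2 : ℚ) ^ 3 * (t.2.2 : ℚ) ^ 3
        = ∑ t ∈ R, (t.1.2 : ℚ) ^ 3 * (t.2.2 : ℚ) ^ 3 := by rw [← p1, q1]
    have L1' : ∑ t ∈ Lb, (t.1.2 : ℚ) ^ 2 * (t.2.2 : ℚ) ^ 4
        = ∑ t ∈ R, (t.1.2 : ℚ) ^ 4 * (t.2.2 : ℚ) ^ 2 := by rw [← p1', q3]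
    have L2 : ∑ t ∈ Rx, (t.1.2 : ℚ) ^ 3 * (t.2.2 : ℚ) ^ 3
        = ∑ t ∈ R, (t.1.1 : ℚ) ^ 3 * (t.2.1 : ℚ) ^ 3 := p2.symm
    have L3 : ∑ t ∈ Lx, (t.1.2 : ℚ) ^ 3 * (t.2.2 : ℚ) ^ 3
        = ∑ t ∈ R, (t.1.1 : ℚ) ^ 3 * (t.2.1 : ℚ) ^ 3 := by rw [← p3, q2]
    have L2' : ∑ t ∈ Rx, (t.1.2 : ℚ) ^ 2 * (t.2.2 : ℚ) ^ 4
        = ∑ t ∈ R, (t.1.1 : ℚ) ^ 2 * (t.2.1 : ℚ) ^ 4 := p2'.symm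
    have L3' : ∑ t ∈ Lx, (t.1.2 : ℚ) ^ 2 * (t.2.2 : ℚ) ^ 4
        = ∑ t ∈ R, (t.1.1 : ℚ) ^ 4 * (t.2.1 : ℚ) ^ 2 := by rw [← p3', q4]
    have L4 : ∑ t ∈ Dx, (t.1.2 : ℚ) ^ 3 * (t.2.2 : ℚ) ^ 3
        = ∑ t ∈ Db, (t.1.1 : ℚ) ^ 3 * (t.2.1 : ℚ) ^ 3 := p4.symm
    have L4' : ∑ t ∈ Dx, (t.1.2 : ℚ) ^ 2 * (t.2.2 : ℚ) ^ 4
        = ∑ t ∈ Db, (t.1.1 : ℚ) ^ 3 * (t.2.1 : ℚ) ^ 3 := by rw [← p4', e1]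
    linarith [t1, t2, t3, t4, c1, d1, k2, k3, k4, L1, L1', L2, L3, L2', L3', L4, L4']
  linarith [final]
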